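/- Let W = M_1·M_2·⋯·M_t in G_BV, where each M_i is a monosyllable of height h_i and h_1 ≤ h_2 ≤ ⋯ ≤ h_t. Then either there exist monosyllables M'_1, …, M'_t, with M'_i of height h_i+1 for each i, and some j < h_t, such that W = M'_1·M'_2·⋯·M'_t·v_j^{-1}, or there exist monosyllables M'_1, …, M'_t, with M'_i of height h_i+1 for each i, such that W = M'_1·M'_2·⋯·M'_t. -/

import Mathlib

namespace BrinStmt10

/-- The free-group generators for the presentation of `G_BV`:
`Sum.inl n` is `v_n`, `Sum.inr (Sum.inl n)` is `π_n`, and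
`Sum.inr (Sum.inr n)` is `π̄_n`. -/
def vF (n : ℕ) : FreeGroup (ℕ ⊕ ℕ ⊕ ℕ) := FreeGroup.of (Sum.inl n)
def piF (n : ℕ) : FreeGroup (ℕ ⊕ ℕ ⊕ ℕ) := FreeGroup.of (Sum.inr (Sum.inl n))
def opiF (n : ℕ) : FreeGroup (ℕ ⊕ ℕ ⊕ ℕ) := FreeGroup.of (Sum.inr (Sum.inr n))

/-- The relators (R1)–(R10) of the presentation of the group `G_BV`. -/
def gbvRels : Set (FreeGroup (ℕ ⊕ ℕ ⊕ ℕ)) :=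
  { r | (∃ m q : ℕ, m < q ∧ r = vF q * vF m * (vF m * vF (q+1))⁻¹) ∨
        (∃ m q : ℕ, m < q ∧ r = piF q * vF m * (vF m * piF (q+1))⁻¹) ∨
        (∃ (m : ℕ) (e : ℤ), (e = 1 ∨ e = -1) ∧
            r = (piF m) ^ e * vF m *
              (vF (m+1) * (piF m) ^ e * (piF (m+1)) ^ e)⁻¹) ∨
        (∃ m q : ℕ, q + 1 < m ∧ r = piF q * vF m * (vF m * piF q)⁻¹) ∨
        (∃ m q : ℕ, m < q ∧ r = opiF q * vF m * (vF m * opiF (q+1))⁻¹) ∨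
        (∃ (m : ℕ) (e : ℤ), (e = 1 ∨ e = -1) ∧
            r = (opiF m) ^ e * vF m * ((piF m) ^ e * (opiF (m+1)) ^ e)⁻¹) ∨
        (∃ m q : ℕ, (m + 2 ≤ q ∨ q + 2 ≤ m) ∧
            r = piF q * piF m * (piF m * piF q)⁻¹) ∨
        (∃ m : ℕ, r = piF m * piF (m+1) * piF m *
            (piF (m+1) * piF m * piF (m+1))⁻¹) ∨
        (∃ m q : ℕ, m + 2 ≤ q ∧ r = opiF q * piF m * (piF m * opiF q)⁻¹) ∨
        (∃ m : ℕ, r = piF m * opiF (m+1) * piF m *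
            (opiF (m+1) * piF m * opiF (m+1))⁻¹) }

/-- The group `G_BV`, presented by generators `v_n, π_n, π̄_n` and relations (R1)–(R10). -/
abbrev GBV := PresentedGroup gbvRels

/-- The generator `v_n` of `G_BV`. -/
def vG (n : ℕ) : GBV := PresentedGroup.of (Sum.inl n)
/-- The generator `π_n` of `G_BV`. -/
def piG (n : ℕ) : GBV := PresentedGroup.of (Sum.inr (Sum.inl n))
/-- The generator `π̄_n` of `G_BV`. -/
def opiG (n : ℕ) : GBV := PresentedGroup.of (Sum.inr (Sum.inr n))

/-- `M` is a monosyllable of height `h` in `G_BV`:  `h ≥ 1` and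
`M = Σ₁ * π̄_{h-1}^γ * Σ₂` where `γ = ±1` and `Σ₁, Σ₂` lie in the subgroup
generated by `{π_i : 0 ≤ i ≤ h-2}` (i.e. those `π_i` with `i + 2 ≤ h`). -/
def IsMonosyllable (h : ℕ) (M : GBV) : Prop :=
  1 ≤ h ∧ ∃ (S₁ S₂ : GBV) (γ : ℤ), (γ = 1 ∨ γ = -1) ∧
    S₁ ∈ Subgroup.closure {x : GBV | ∃ i, i + 2 ≤ h ∧ x = piG i} ∧
    S₂ ∈ Subgroup.closure {x : GBV | ∃ i, i + 2 ≤ h ∧ x = piG i} ∧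
    M = S₁ * (opiG (h-1)) ^ γ * S₂

/-! ### Extracting the defining relations as equations in `G_BV`. -/

private lemma eq_of_rel {x y : FreeGroup (ℕ ⊕ ℕ ⊕ ℕ)} (hxy : x * y⁻¹ ∈ gbvRels) :
    PresentedGroup.mk gbvRels x = PresentedGroup.mk gbvRels y := by
  have h1 : PresentedGroup.mk gbvRels (x * y⁻¹) = 1 :=
    (QuotientGroup.eq_one_iff _).2 (Subgroup.subset_normalClosure hxy)
  rw [map_mul, map_inv] at h1
  exact mul_inv_eq_one.mp h1

private lemma rel2 (q m : ℕ) (h : m < q) : piG q * vG m = vG m * piG (q+1) := by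
  have := eq_of_rel (Or.inr (Or.inl ⟨m, q, h, rfl⟩))
  simp only [map_mul] at this; exact this

private lemma rel3 (m : ℕ) (e : ℤ) (he : e = 1 ∨ e = -1) :
    (piG m) ^ e * vG m = vG (m+1) * (piG m) ^ e * (piG (m+1)) ^ e := by
  have := eq_of_rel (Or.inr (Or.inr (Or.inl ⟨m, e, he, rfl⟩)))
  simp only [map_mul, map_zpow] at this; exact this

private lemma rel4 (q m : ℕ) (h : q + 1 < m) : piG q * vG m = vG m * piG q := by
  have := eq_of_rel (Or.inr (Or.inr (Or.inr (Or.inl ⟨m, q, h, rfl⟩))))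
  simp only [map_mul] at this; exact this

private lemma rel5 (q m : ℕ) (h : m < q) : opiG q * vG m = vG m * opiG (q+1) := by
  have := eq_of_rel (Or.inr (Or.inr (Or.inr (Or.inr (Or.inl ⟨m, q, h, rfl⟩)))))
  simp only [map_mul] at this; exact this

private lemma rel6 (m : ℕ) (e : ℤ) (he : e = 1 ∨ e = -1) :
    (opiG m) ^ e * vG m = (piG m) ^ e * (opiG (m+1)) ^ e := by
  have := eq_of_rel
    (Or.inr (Or.inr (Or.inr (Or.inr (Or.inr (Or.inl ⟨m, e, he, rfl⟩))))))
  simp only [map_mul, map_zpow] at this; exact this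

/-! ### Derived rewriting rules for pushing `v_m⁻¹` to the right. -/

private lemma conj_push {G : Type*} [Group G] {g x y : G} (h : g⁻¹ * x * g = y) (e : ℤ) :
    g⁻¹ * x ^ e = y ^ e * g⁻¹ := by
  have hc : (g⁻¹ * x * g⁻¹⁻¹) ^ e = g⁻¹ * x ^ e * g⁻¹⁻¹ := conj_zpow
  rw [inv_inv, h] at hc
  rw [hc]
  group

private lemma ruleA (i m : ℕ) (hlt : i + 1 < m) (e : ℤ) :
    (vG m)⁻¹ * (piG i) ^ e = (piG i) ^ e * (vG m)⁻¹ :=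
  conj_push (by rw [mul_assoc, rel4 i m hlt, inv_mul_cancel_left]) e

private lemma ruleD (i m : ℕ) (hlt : m < i) (e : ℤ) :
    (vG m)⁻¹ * (piG i) ^ e = (piG (i+1)) ^ e * (vG m)⁻¹ :=
  conj_push (by rw [mul_assoc, rel2 i m hlt, inv_mul_cancel_left]) e

private lemma ruleE (q m : ℕ) (hlt : m < q) (e : ℤ) :
    (vG m)⁻¹ * (opiG q) ^ e = (opiG (q+1)) ^ e * (vG m)⁻¹ :=
  conj_push (by rw [mul_assoc, rel5 q m hlt, inv_mul_cancel_left]) e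

private lemma ruleB (i : ℕ) (e : ℤ) (he : e = 1 ∨ e = -1) :
    (vG (i+1))⁻¹ * (piG i) ^ e = (piG i) ^ e * (piG (i+1)) ^ e * (vG i)⁻¹ := by
  have h3 := rel3 i e he
  calc (vG (i+1))⁻¹ * (piG i) ^ e
      = (vG (i+1))⁻¹ * ((piG i) ^ e * vG i) * (vG i)⁻¹ := by group
    _ = (vG (i+1))⁻¹ * (vG (i+1) * (piG i) ^ e * (piG (i+1)) ^ e) * (vG i)⁻¹ := by rw [h3]
    _ = (piG i) ^ e * (piG (i+1)) ^ e * (vG i)⁻¹ := by group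

private lemma ruleC (i : ℕ) (e : ℤ) (he : e = 1 ∨ e = -1) :
    (vG i)⁻¹ * (piG i) ^ e = (piG (i+1)) ^ e * (piG i) ^ e * (vG (i+1))⁻¹ := by
  have h3 := rel3 i (-e) (by omega)
  calc (vG i)⁻¹ * (piG i) ^ e
      = ((piG i) ^ (-e) * vG i)⁻¹ := by group
    _ = (vG (i+1) * (piG i) ^ (-e) * (piG (i+1)) ^ (-e))⁻¹ := by rw [h3]
    _ = (piG (i+1)) ^ e * (piG i) ^ e * (vG (i+1))⁻¹ := by group

private lemma ruleF (m : ℕ) (γ : ℤ) (hγ : γ = 1 ∨ γ = -1) :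
    (vG m)⁻¹ * (opiG m) ^ γ = (opiG (m+1)) ^ γ * (piG m) ^ γ := by
  have h6 := rel6 m (-γ) (by omega)
  calc (vG m)⁻¹ * (opiG m) ^ γ
      = ((opiG m) ^ (-γ) * vG m)⁻¹ := by group
    _ = ((piG m) ^ (-γ) * (opiG (m+1)) ^ (-γ))⁻¹ := by rw [h6]
    _ = (opiG (m+1)) ^ γ * (piG m) ^ γ := by group

private lemma ruleG (m : ℕ) (γ : ℤ) (hγ : γ = 1 ∨ γ = -1) :
    (opiG m) ^ γ = (piG m) ^ γ * (opiG (m+1)) ^ γ * (vG m)⁻¹ := by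
  have h6 := rel6 m γ hγ
  calc (opiG m) ^ γ
      = ((opiG m) ^ γ * vG m) * (vG m)⁻¹ := by group
    _ = ((piG m) ^ γ * (opiG (m+1)) ^ γ) * (vG m)⁻¹ := by rw [h6]

/-! ### The subgroups generated by low-index `π`'s. -/

private abbrev genSet (H : ℕ) : Set GBV := {x : GBV | ∃ i, i + 2 ≤ H ∧ x = piG i}

private abbrev K (H : ℕ) : Subgroup GBV := Subgroup.closure (genSet H)

private lemma pimem {i H : ℕ} (hiH : i + 2 ≤ H) (e : ℤ) : (piG i) ^ e ∈ K H := by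
  refine Subgroup.zpow_mem _ (Subgroup.subset_closure ?_) e
  exact ⟨i, hiH, rfl⟩

private lemma K_mono {H : ℕ} : K H ≤ K (H+1) :=
  Subgroup.closure_mono (fun x hx => by
    obtain ⟨i, hi, rfl⟩ := hx; exact ⟨i, by omega, rfl⟩)

/-! ### Pushing `v_m⁻¹` through an element of `K H`. -/

private lemma push_letter (H : ℕ) (x : GBV) (hx : x ∈ genSet H ∪ (genSet H)⁻¹)
    (m : ℕ) (hm : m < H) :
    ∃ y j, y ∈ K (H+1) ∧ j < H ∧ (vG m)⁻¹ * x = y * (vG j)⁻¹ := by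
  have hie : ∃ (i : ℕ) (e : ℤ), i + 2 ≤ H ∧ (e = 1 ∨ e = -1) ∧ x = (piG i) ^ e := by
    rcases hx with hx | hx
    · obtain ⟨i, hi, rfl⟩ := hx
      exact ⟨i, 1, hi, Or.inl rfl, (zpow_one _).symm⟩
    · rw [Set.mem_inv] at hx
      obtain ⟨i, hi, hxi⟩ := hx
      exact ⟨i, -1, hi, Or.inr rfl, by rw [zpow_neg_one, ← hxi, inv_inv]⟩
  obtain ⟨i, e, hiH, he, rfl⟩ := hie
  rcases Nat.lt_trichotomy (i+1) m with hlt | heq | hgt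
  · exact ⟨(piG i) ^ e, m, pimem (by omega) e, hm, ruleA i m hlt e⟩
  · subst heq
    exact ⟨(piG i) ^ e * (piG (i+1)) ^ e, i,
      mul_mem (pimem (by omega) e) (pimem (by omega) e), by omega, ruleB i e he⟩
  · rcases Nat.eq_or_lt_of_le (Nat.lt_succ_iff.mp hgt) with heq | hlt
    · subst heq
      exact ⟨(piG (m+1)) ^ e * (piG m) ^ e, m + 1,
        mul_mem (pimem (by omega) e) (pimem (by omega) e), by omega, ruleC m e he⟩
    · exact ⟨(piG (i+1)) ^ e, m, pimem (by omega) e, hm, ruleD i m hlt e⟩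

private lemma push_list (H : ℕ) (l : List GBV) :
    (∀ y ∈ l, y ∈ genSet H ∪ (genSet H)⁻¹) →
    ∀ m, m < H →
    ∃ S' j, S' ∈ K (H+1) ∧ j < H ∧ (vG m)⁻¹ * l.prod = S' * (vG j)⁻¹ := by
  induction l with
  | nil =>
    intro _ m hm
    exact ⟨1, m, one_mem _, hm, by simp⟩
  | cons x l ihl =>
    intro hl m hm
    obtain ⟨y, m₁, hy, hm₁, hx⟩ := push_letter H x (hl x List.mem_cons_self) m hm
    obtain ⟨S', j, hS', hj, hrest⟩ :=
      ihl (fun z hz => hl z (List.mem_cons_of_mem x hz)) m₁ hm₁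
    refine ⟨y * S', j, mul_mem hy hS', hj, ?_⟩
    rw [List.prod_cons, ← mul_assoc, hx, mul_assoc, hrest, ← mul_assoc]

private lemma push {H : ℕ} {S : GBV} (hS : S ∈ K H) {m : ℕ} (hm : m < H) :
    ∃ S' j, S' ∈ K (H+1) ∧ j < H ∧ (vG m)⁻¹ * S = S' * (vG j)⁻¹ := by
  have h2 : S ∈ Submonoid.closure (genSet H ∪ (genSet H)⁻¹) := by
    rw [← Subgroup.closure_toSubmonoid]; exact hS
  obtain ⟨l, hl, rfl⟩ := Submonoid.exists_list_of_mem_closure h2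
  exact push_list H l hl m hm

/-! ### Raising a single monosyllable. -/

private lemma raise_nov (h : ℕ) (M : GBV) (hM : IsMonosyllable h M) :
    ∃ M', IsMonosyllable (h+1) M' ∧ ∃ j, j < h ∧ M = M' * (vG j)⁻¹ := by
  obtain ⟨h1, S₁, S₂, γ, hγ, hS₁, hS₂, rfl⟩ := hM
  obtain ⟨k, rfl⟩ : ∃ k, h = k + 1 := ⟨h - 1, by omega⟩
  obtain ⟨S₂', j, hS₂', hj, hpush⟩ := push (H := k+1) hS₂ (Nat.lt_succ_self k)
  refine ⟨(S₁ * (piG k) ^ γ) * (opiG (k+1)) ^ γ * S₂',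
    ⟨by omega, S₁ * (piG k) ^ γ, S₂', γ, hγ,
      mul_mem (K_mono hS₁) (pimem (by omega) γ), hS₂', rfl⟩, j, hj, ?_⟩
  calc S₁ * (opiG k) ^ γ * S₂
      = S₁ * ((piG k) ^ γ * (opiG (k+1)) ^ γ * (vG k)⁻¹) * S₂ := by rw [← ruleG k γ hγ]
    _ = (S₁ * (piG k) ^ γ) * (opiG (k+1)) ^ γ * ((vG k)⁻¹ * S₂) := by
          simp only [mul_assoc]
    _ = (S₁ * (piG k) ^ γ) * (opiG (k+1)) ^ γ * (S₂' * (vG j)⁻¹) := by rw [hpush]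
    _ = (S₁ * (piG k) ^ γ) * (opiG (k+1)) ^ γ * S₂' * (vG j)⁻¹ := by
          simp only [mul_assoc]

private lemma raise_with (h : ℕ) (M : GBV) (hM : IsMonosyllable h M)
    (m : ℕ) (hm : m < h) :
    ∃ M', IsMonosyllable (h+1) M' ∧
      ((∃ j, j < h ∧ (vG m)⁻¹ * M = M' * (vG j)⁻¹) ∨ (vG m)⁻¹ * M = M') := by
  obtain ⟨h1, S₁, S₂, γ, hγ, hS₁, hS₂, rfl⟩ := hM
  obtain ⟨k, rfl⟩ : ∃ k, h = k + 1 := ⟨h - 1, by omega⟩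
  obtain ⟨S₁', m₁, hS₁', hm₁, hpush₁⟩ := push (H := k+1) hS₁ hm
  rcases Nat.eq_or_lt_of_le (Nat.lt_succ_iff.mp hm₁) with hmk | hmk
  · -- m₁ = k : the `v⁻¹` is absorbed by the `π̄`.
    rw [hmk] at hpush₁
    refine ⟨S₁' * (opiG (k+1)) ^ γ * ((piG k) ^ γ * S₂),
      ⟨by omega, S₁', (piG k) ^ γ * S₂, γ, hγ, hS₁',
        mul_mem (pimem (by omega) γ) (K_mono hS₂), rfl⟩, Or.inr ?_⟩
    calc (vG m)⁻¹ * (S₁ * (opiG k) ^ γ * S₂)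
        = ((vG m)⁻¹ * S₁) * ((opiG k) ^ γ * S₂) := by simp only [mul_assoc]
      _ = (S₁' * (vG k)⁻¹) * ((opiG k) ^ γ * S₂) := by rw [hpush₁]
      _ = S₁' * (((vG k)⁻¹ * (opiG k) ^ γ) * S₂) := by simp only [mul_assoc]
      _ = S₁' * (((opiG (k+1)) ^ γ * (piG k) ^ γ) * S₂) := by rw [ruleF k γ hγ]
      _ = S₁' * (opiG (k+1)) ^ γ * ((piG k) ^ γ * S₂) := by simp only [mul_assoc]
  · -- m₁ < k : the `v⁻¹` moves past the `π̄`.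
    obtain ⟨S₂', j, hS₂', hj, hpush₂⟩ := push (H := k+1) hS₂ (show m₁ < k + 1 by omega)
    refine ⟨S₁' * (opiG (k+1)) ^ γ * S₂',
      ⟨by omega, S₁', S₂', γ, hγ, hS₁', hS₂', rfl⟩, Or.inl ⟨j, hj, ?_⟩⟩
    calc (vG m)⁻¹ * (S₁ * (opiG k) ^ γ * S₂)
        = ((vG m)⁻¹ * S₁) * ((opiG k) ^ γ * S₂) := by simp only [mul_assoc]
      _ = (S₁' * (vG m₁)⁻¹) * ((opiG k) ^ γ * S₂) := by rw [hpush₁]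
      _ = S₁' * (((vG m₁)⁻¹ * (opiG k) ^ γ) * S₂) := by simp only [mul_assoc]
      _ = S₁' * (((opiG (k+1)) ^ γ * (vG m₁)⁻¹) * S₂) := by rw [ruleE k m₁ hmk γ]
      _ = S₁' * (opiG (k+1)) ^ γ * ((vG m₁)⁻¹ * S₂) := by simp only [mul_assoc]
      _ = S₁' * (opiG (k+1)) ^ γ * (S₂' * (vG j)⁻¹) := by rw [hpush₂]
      _ = S₁' * (opiG (k+1)) ^ γ * S₂' * (vG j)⁻¹ := by simp only [mul_assoc]

/-! ### The main induction. -/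

private lemma prod_one (f : Fin 1 → GBV) : (List.ofFn f).prod = f 0 := by
  simp [List.ofFn_succ]

private lemma prod_cons {t : ℕ} (N : GBV) (T' : Fin (t+1) → GBV) :
    (List.ofFn (Fin.cases N T' : Fin (t+2) → GBV)).prod = N * (List.ofFn T').prod := by
  rw [List.ofFn_succ, List.prod_cons]
  simp only [Fin.cases_zero, Fin.cases_succ]

private lemma aux (t : ℕ) :
    ∀ (M : Fin (t+1) → GBV) (h : Fin (t+1) → ℕ),
    (∀ i, IsMonosyllable (h i) (M i)) →
    (∀ i j : Fin (t+1), i ≤ j → h i ≤ h j) →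
    ((∃ M' : Fin (t+1) → GBV, (∀ i, IsMonosyllable (h i + 1) (M' i)) ∧
        ((∃ j, j < h (Fin.last t) ∧
            (List.ofFn M).prod = (List.ofFn M').prod * (vG j)⁻¹) ∨
          (List.ofFn M).prod = (List.ofFn M').prod)) ∧
     (∀ m, m < h 0 → ∃ M' : Fin (t+1) → GBV,
        (∀ i, IsMonosyllable (h i + 1) (M' i)) ∧
        ((∃ j, j < h (Fin.last t) ∧
            (vG m)⁻¹ * (List.ofFn M).prod = (List.ofFn M').prod * (vG j)⁻¹) ∨
          (vG m)⁻¹ * (List.ofFn M).prod = (List.ofFn M').prod))) := by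
  induction t with
  | zero =>
    intro M h hmono _
    constructor
    · obtain ⟨N, hN, j, hj, heq⟩ := raise_nov (h 0) (M 0) (hmono 0)
      refine ⟨fun _ => N, fun i => by rw [show i = 0 by omega]; exact hN,
        Or.inl ⟨j, hj, ?_⟩⟩
      rw [prod_one, prod_one]
      exact heq
    · intro m hm
      obtain ⟨N, hN, hcase⟩ := raise_with (h 0) (M 0) (hmono 0) m hm
      refine ⟨fun _ => N, fun i => by rw [show i = 0 by omega]; exact hN, ?_⟩
      rcases hcase with ⟨j, hj, heq⟩ | heq
      · exact Or.inl ⟨j, hj, by rw [prod_one, prod_one]; exact heq⟩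
      · exact Or.inr (by rw [prod_one, prod_one]; exact heq)
  | succ t ih =>
    intro M h hmono hsorted
    have IH := ih (fun i => M i.succ) (fun i => h i.succ)
      (fun i => hmono i.succ)
      (fun i j hij => hsorted i.succ j.succ (Fin.succ_le_succ_iff.mpr hij))
    have hsl : (Fin.last t).succ = Fin.last (t+1) := rfl
    have h01 : h 0 ≤ h (Fin.succ 0) := hsorted 0 (Fin.succ 0) (Fin.zero_le _)
    have hprodM : (List.ofFn M).prod
        = M 0 * (List.ofFn (fun i : Fin (t+1) => M i.succ)).prod := by
      rw [List.ofFn_succ, List.prod_cons]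
    have hmono' : ∀ (N : GBV) (T' : Fin (t+1) → GBV),
        IsMonosyllable (h 0 + 1) N →
        (∀ i, IsMonosyllable (h i.succ + 1) (T' i)) →
        ∀ i : Fin (t+2), IsMonosyllable (h i + 1) ((Fin.cases N T' : Fin (t+2) → GBV) i) := by
      intro N T' hN hT' i
      rcases Fin.eq_zero_or_eq_succ i with rfl | ⟨i', rfl⟩
      · simpa using hN
      · simpa using hT' i'
    constructor
    · obtain ⟨N, hN, j₀, hj₀, heq₀⟩ := raise_nov (h 0) (M 0) (hmono 0)
      obtain ⟨T', hT', hcase⟩ := IH.2 j₀ (lt_of_lt_of_le hj₀ h01)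
      refine ⟨Fin.cases N T', hmono' N T' hN hT', ?_⟩
      rcases hcase with ⟨j, hj, heq⟩ | heq
      · refine Or.inl ⟨j, by rw [← hsl]; exact hj, ?_⟩
        rw [hprodM, prod_cons, heq₀, mul_assoc, heq, ← mul_assoc]
      · refine Or.inr ?_
        rw [hprodM, prod_cons, heq₀, mul_assoc, heq]
    · intro m hm
      obtain ⟨N, hN, hcase0⟩ := raise_with (h 0) (M 0) (hmono 0) m hm
      rcases hcase0 with ⟨j₀, hj₀, heq₀⟩ | heq₀
      · obtain ⟨T', hT', hcase⟩ := IH.2 j₀ (lt_of_lt_of_le hj₀ h01)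
        refine ⟨Fin.cases N T', hmono' N T' hN hT', ?_⟩
        rcases hcase with ⟨j, hj, heq⟩ | heq
        · refine Or.inl ⟨j, by rw [← hsl]; exact hj, ?_⟩
          rw [hprodM, prod_cons, ← mul_assoc, heq₀, mul_assoc, heq, ← mul_assoc]
        · refine Or.inr ?_
          rw [hprodM, prod_cons, ← mul_assoc, heq₀, mul_assoc, heq]
      · obtain ⟨T', hT', hcase⟩ := IH.1
        refine ⟨Fin.cases N T', hmono' N T' hN hT', ?_⟩
        rcases hcase with ⟨j, hj, heq⟩ | heq
        · refine Or.inl ⟨j, by rw [← hsl]; exact hj, ?_⟩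
          rw [hprodM, prod_cons, ← mul_assoc, heq₀, heq, ← mul_assoc]
        · refine Or.inr ?_
          rw [hprodM, prod_cons, ← mul_assoc, heq₀, heq]

/-- Lemma: if `W = M_1 M_2 ⋯ M_t` where each `M_i` is a monosyllable of height `h_i`
and `h_1 ≤ h_2 ≤ ⋯ ≤ h_t`, then either `W = M'_1 M'_2 ⋯ M'_t · v_j⁻¹` for some
`j < h_t`, or `W = M'_1 M'_2 ⋯ M'_t`, where each `M'_i` is a monosyllable of
height `h_i + 1`. -/
theorem monosyllable_product_height_raising (t : ℕ) (ht : 0 < t)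
    (M : Fin t → GBV) (h : Fin t → ℕ)
    (hmono : ∀ i, IsMonosyllable (h i) (M i))
    (hsorted : ∀ i j : Fin t, i ≤ j → h i ≤ h j) :
    ∃ M' : Fin t → GBV, (∀ i, IsMonosyllable (h i + 1) (M' i)) ∧
      ((∃ j, j < h ⟨t - 1, Nat.sub_lt ht Nat.one_pos⟩ ∧
          (List.ofFn M).prod = (List.ofFn M').prod * (vG j)⁻¹) ∨
        (List.ofFn M).prod = (List.ofFn M').prod) := by
  obtain ⟨n, rfl⟩ : ∃ n, t = n + 1 := ⟨t - 1, by omega⟩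
  obtain ⟨M', hM', hcase⟩ := (aux n M h hmono hsorted).1
  refine ⟨M', hM', ?_⟩
  have hidx : (⟨n + 1 - 1, Nat.sub_lt ht Nat.one_pos⟩ : Fin (n+1)) = Fin.last n :=
    Fin.ext (by simp)
  rw [hidx]
  exact hcase

end BrinStmt10
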